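/- Discrete summation-by-parts dissipation identity: for any grid function f, with u = f/M (pointwise) and the conservative discrete Fokker–Planck operator L_h with zero-flux velocity boundaries, one has Σ_{p,q} [L_h f]_{p,q} · u_{p,q} · Δx Δv = − (Δx/Δv) Σ_{p=1}^{N_x} Σ_{q=1}^{N_v−1} M_{p,q+1/2} (u_{p,q+1} − u_{p,q})², where M_{p,q+1/2} = sqrt(M_{p,q} M_{p,q+1}). In particular the quadratic form ⟨L_h f, f/M⟩ is nonpositive. -/

import Mathlib

/-- Abel/summation-by-parts identity for sequences. -/
lemma abel_sbp (a b : ℕ → ℝ) : ∀ n : ℕ,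
    ∑ q ∈ Finset.Icc 1 (n+1), (a q - a (q-1)) * b q
      = a (n+1) * b (n+1) - a 0 * b 1
        - ∑ q ∈ Finset.Icc 1 n, a q * (b (q+1) - b q) := by
  intro n
  induction n with
  | zero => simp; ring
  | succ m ih =>
    rw [Finset.sum_Icc_succ_top (by omega : 1 ≤ m + 1 + 1), ih,
      Finset.sum_Icc_succ_top (by omega : 1 ≤ m + 1)]
    simp only [Nat.add_sub_cancel]
    ring

/-- discrete summation-by-parts dissipation identity for the conservative
Fokker–Planck stencil, and nonpositivity of the quadratic form `⟨L_h f, f/M⟩`. -/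
theorem fokker_planck_summation_by_parts
    (Nx Nv : ℕ) (hNx : 1 ≤ Nx) (hNv : 1 ≤ Nv) (Δx Δv : ℝ) (hΔx : 0 < Δx) (hΔv : 0 < Δv)
    (M f : ℕ → ℕ → ℝ) (hM : ∀ p q, 0 < M p q)
    (u : ℕ → ℕ → ℝ) (hu : ∀ p q, u p q = f p q / M p q)
    (J : ℕ → ℕ → ℝ)
    (hJ0 : ∀ p, J p 0 = 0) (hJN : ∀ p, J p Nv = 0)
    (hJ : ∀ p q, 1 ≤ q → q ≤ Nv - 1 →
      J p q = Real.sqrt (M p q * M p (q+1)) * (u p (q+1) - u p q) / Δv)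
    (Lh : ℕ → ℕ → ℝ)
    (hLh : ∀ p q, 1 ≤ q → q ≤ Nv → Lh p q = (J p q - J p (q-1)) / Δv) :
    (∑ p ∈ Finset.Icc 1 Nx, ∑ q ∈ Finset.Icc 1 Nv, Lh p q * u p q * (Δx * Δv))
      = -(Δx / Δv) * ∑ p ∈ Finset.Icc 1 Nx, ∑ q ∈ Finset.Icc 1 (Nv - 1),
          Real.sqrt (M p q * M p (q+1)) * (u p (q+1) - u p q)^2
    ∧ (∑ p ∈ Finset.Icc 1 Nx, ∑ q ∈ Finset.Icc 1 Nv, Lh p q * u p q * (Δx * Δv)) ≤ 0 := by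
  obtain ⟨n, rfl⟩ : ∃ n, Nv = n + 1 := ⟨Nv - 1, by omega⟩
  have key : ∀ p, ∑ q ∈ Finset.Icc 1 (n+1), Lh p q * u p q * (Δx * Δv)
      = -(Δx / Δv) * ∑ q ∈ Finset.Icc 1 n,
          Real.sqrt (M p q * M p (q+1)) * (u p (q+1) - u p q)^2 := by
    intro p
    have h1 : ∑ q ∈ Finset.Icc 1 (n+1), Lh p q * u p q * (Δx * Δv)
        = (∑ q ∈ Finset.Icc 1 (n+1), (J p q - J p (q-1)) * u p q) * Δx := by
      rw [Finset.sum_mul]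
      apply Finset.sum_congr rfl
      intro q hq
      simp only [Finset.mem_Icc] at hq
      rw [hLh p q hq.1 hq.2]
      have hv : Δv ≠ 0 := ne_of_gt hΔv
      field_simp
    rw [h1, abel_sbp (J p) (u p) n, hJ0 p, hJN p]
    have h2 : ∑ q ∈ Finset.Icc 1 n, J p q * (u p (q+1) - u p q)
        = (∑ q ∈ Finset.Icc 1 n,
            Real.sqrt (M p q * M p (q+1)) * (u p (q+1) - u p q)^2) / Δv := by
      rw [Finset.sum_div]
      apply Finset.sum_congr rfl
      intro q hq
      simp only [Finset.mem_Icc] at hq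
      rw [hJ p q hq.1 (by omega)]
      ring
    rw [h2]
    have hv : Δv ≠ 0 := ne_of_gt hΔv
    field_simp
    ring
  have hsum : (∑ p ∈ Finset.Icc 1 Nx, ∑ q ∈ Finset.Icc 1 (n+1), Lh p q * u p q * (Δx * Δv))
      = -(Δx / Δv) * ∑ p ∈ Finset.Icc 1 Nx, ∑ q ∈ Finset.Icc 1 ((n+1) - 1),
          Real.sqrt (M p q * M p (q+1)) * (u p (q+1) - u p q)^2 := by
    simp only [Nat.add_sub_cancel]
    rw [Finset.mul_sum]
    exact Finset.sum_congr rfl fun p _ => key p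
  refine ⟨hsum, ?_⟩
  rw [hsum]
  have hS : 0 ≤ ∑ p ∈ Finset.Icc 1 Nx, ∑ q ∈ Finset.Icc 1 ((n+1) - 1),
      Real.sqrt (M p q * M p (q+1)) * (u p (q+1) - u p q)^2 := by
    apply Finset.sum_nonneg; intro p _
    apply Finset.sum_nonneg; intro q _
    positivity
  have : 0 ≤ Δx / Δv := le_of_lt (div_pos hΔx hΔv)
  nlinarith
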